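/- Let C be a finite non-degenerate projective configuration and let g, g' : 𝒜 → F be two maps with g(i,p)·g'(i,p)⁻¹ ∈ [F,F] for every (i,p) ∈ 𝒜. Then there exists a group isomorphism G(g)/γ₄G(g) → G(g')/γ₄G(g') which, for every i = 1,…,n, carries the class of wᵢ to an element congruent to the class of wᵢ modulo the commutator subgroup of G(g')/γ₄G(g'). -/

import Mathlib

open scoped Classical

namespace Rybnikov7

/- A finite non-degenerate projective configuration with lines `l₀, l₁, …, lₙ`
(indexed by `Fin (n+1)`, `l₀` the line at infinity) and points of type `P`,
with incidence relation `inc`.  The free group `F` has generators `w i` (`i : Fin n`),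
where `w i` corresponds to `w_{i+1}`, i.e. to the line `l_{i.succ}`. -/

variable {n : ℕ} {P : Type*}

abbrev F (n : ℕ) := FreeGroup (Fin n)

/-- `w i (p)= g(i,p)⁻¹ · wᵢ · g(i,p)`. -/
def wp (g : Fin n → P → F n) (p : P) (i : Fin n) : F n :=
  (g i p)⁻¹ * FreeGroup.of i * g i p

/-- The increasing list `i₁ < i₂ < … < i_k` of (generator) indices of the lines
through `p` (among `l₁, …, lₙ`). -/
noncomputable def sList [Fintype P] (inc : Fin (n + 1) → P → Prop) (p : P) :
    List (Fin n) :=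
  (Finset.univ.filter fun i : Fin n => inc i.succ p).sort (· ≤ ·)

/-- `c_α(p) = w_{i_α}(p) ⋯ w_{i₁}(p) · w_{i_k}(p) ⋯ w_{i_{α+1}}(p)`
(for `α = 0` this is `c₀(p) = c_k(p) = w_{i_k}(p) ⋯ w_{i₁}(p)`). -/
noncomputable def cword [Fintype P] (inc : Fin (n + 1) → P → Prop)
    (g : Fin n → P → F n) (p : P) (α : ℕ) : F n :=
  (((sList inc p).take α).reverse.map (wp g p)).prod *
    (((sList inc p).drop α).reverse.map (wp g p)).prod

/-- The set of relators `r_g(i,p) = c_{α-1}(p)⁻¹ · c_α(p)` for `(i,p) ∈ 𝒜`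
(`p ∈ 𝒫₀`, `l_{i.succ}` through `p`) with `i` not minimal among the lines through `p`;
here `α - 1` is the position `(sList inc p).idxOf i` of `i` in the increasing list. -/
noncomputable def relSet [Fintype P] (inc : Fin (n + 1) → P → Prop)
    (g : Fin n → P → F n) : Set (F n) :=
  {x | ∃ (i : Fin n) (p : P), ¬ inc 0 p ∧ inc i.succ p ∧
    (sList inc p).idxOf i ≠ 0 ∧
    x = (cword inc g p ((sList inc p).idxOf i))⁻¹ *
        cword inc g p ((sList inc p).idxOf i + 1)}

/-- `G(g)`, the group presented by the relators `R(g)`. -/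
noncomputable abbrev G [Fintype P] (inc : Fin (n + 1) → P → Prop)
    (g : Fin n → P → F n) :=
  PresentedGroup (relSet inc g)

/-- **Proposition 2.2 of Rybnikov's paper.** For a finite non-degenerate projective
configuration, if `g ≡ g'` modulo `[F,F]` on `𝒜`, then there is an isomorphism
`G(g)/γ₄G(g) ≃ G(g')/γ₄G(g')` carrying each generator class to an element congruent
to the corresponding generator class modulo the commutator subgroup
(`(⊤ : Subgroup G).lowerCentralSeries 3 = γ₄ G`, as Mathlib's indexing starts at `0`). -/
lemma comm_rearrange {Gp : Type*} [Group Gp] (a b c d : Gp) (h : b * c = c * b) :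
    (a * b) * (c * d) = (a * c) * (b * d) := by
  rw [mul_assoc a b, ← mul_assoc b c, h, mul_assoc c b, ← mul_assoc a c]

lemma lcs_map_eq {G H : Type*} [Group G] [Group H] (f : G →* H)
    (hf : Function.Surjective f) (k : ℕ) :
    ((⊤ : Subgroup G).lowerCentralSeries k).map f = (⊤ : Subgroup H).lowerCentralSeries k := by
  induction k with
  | zero => simpa using Subgroup.map_top_of_surjective f hf
  | succ k ih =>
    show Subgroup.map f ⁅(⊤ : Subgroup G).lowerCentralSeries k, ⊤⁆ = ⁅(⊤ : Subgroup H).lowerCentralSeries k, ⊤⁆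
    rw [Subgroup.map_commutator, ih, Subgroup.map_top_of_surjective f hf]

noncomputable def MM [Fintype P] (inc : Fin (n + 1) → P → Prop)
    (g : Fin n → P → F n) : Subgroup (F n) :=
  Subgroup.normalClosure (relSet inc g) ⊔ (⊤ : Subgroup (F n)).lowerCentralSeries 3

instance [Fintype P] (inc : Fin (n + 1) → P → Prop) (g : Fin n → P → F n) :
    (MM inc g).Normal :=
  Subgroup.sup_normal _ _

open scoped commutatorElement in
lemma relSet_subset_MM [Fintype P] (inc : Fin (n + 1) → P → Prop)
    (g g' : Fin n → P → F n)
    (hgg' : ∀ (i : Fin n) (p : P), ¬ inc 0 p → inc i.succ p →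
      g i p * (g' i p)⁻¹ ∈ commutator (F n)) :
    relSet inc g' ⊆ (MM inc g : Set (F n)) := by
  rintro x ⟨i, p, h0, hi, hidx, rfl⟩
  set M := MM inc g with hM
  rw [SetLike.mem_coe, ← QuotientGroup.eq_one_iff]
  set π : F n →* (F n ⧸ M) := QuotientGroup.mk' M with hπ
  have hsurj : Function.Surjective π := Quot.mk_surjective
  -- γ₄ of the quotient is trivial
  have hbot : (⊤ : Subgroup (F n ⧸ M)).lowerCentralSeries 3 = ⊥ := by
    rw [← lcs_map_eq π hsurj 3, Subgroup.map_eq_bot_iff, hπ, QuotientGroup.ker_mk']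
    exact le_sup_right
  -- γ₃ of the quotient is central
  have central : ∀ z ∈ (⊤ : Subgroup (F n ⧸ M)).lowerCentralSeries 2, ∀ h : F n ⧸ M, Commute h z := by
    intro z hz h
    have h1 : ⁅h, z⁆ ∈ ⁅(⊤ : Subgroup (F n ⧸ M)), (⊤ : Subgroup (F n ⧸ M)).lowerCentralSeries 2⁆ :=
      Subgroup.commutator_mem_commutator (Subgroup.mem_top h) hz
    rw [Subgroup.commutator_comm] at h1
    have h2 : ⁅h, z⁆ ∈ (⊤ : Subgroup (F n ⧸ M)).lowerCentralSeries 3 := h1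
    rw [hbot, Subgroup.mem_bot] at h2
    exact commutatorElement_eq_one_iff_commute.mp h2
  -- the correction terms
  set z : Fin n → (F n ⧸ M) := fun j => π (wp g' p j) * (π (wp g p j))⁻¹ with hzdef
  have hzmem : ∀ j : Fin n, inc j.succ p → z j ∈ (⊤ : Subgroup (F n ⧸ M)).lowerCentralSeries 2 := by
    intro j hj
    have hc : g' j p * (g j p)⁻¹ ∈ commutator (F n) := by
      have := (commutator (F n)).inv_mem (hgg' j p h0 hj)
      simpa [mul_inv_rev] using this
    have key : wp g' p j * (wp g p j)⁻¹ =
        (g' j p)⁻¹ * ⁅FreeGroup.of j, g' j p * (g j p)⁻¹⁆ * (g' j p) := by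
      simp only [wp, commutatorElement_def]
      group
    have hmem2 : wp g' p j * (wp g p j)⁻¹ ∈ (⊤ : Subgroup (F n)).lowerCentralSeries 2 := by
      rw [key]
      have h3 : ⁅FreeGroup.of j, g' j p * (g j p)⁻¹⁆ ∈
          ⁅(⊤ : Subgroup (F n)), commutator (F n)⁆ :=
        Subgroup.commutator_mem_commutator (Subgroup.mem_top _) hc
      rw [Subgroup.commutator_comm] at h3
      have h4 : ⁅FreeGroup.of j, g' j p * (g j p)⁻¹⁆ ∈ (⊤ : Subgroup (F n)).lowerCentralSeries 2 := h3
      have := (inferInstance : ((⊤ : Subgroup (F n)).lowerCentralSeries 2).Normal).conj_mem _ h4 (g' j p)⁻¹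
      simpa [mul_assoc] using this
    have : π (wp g' p j * (wp g p j)⁻¹) ∈ (⊤ : Subgroup (F n ⧸ M)).lowerCentralSeries 2 :=
      by rw [← lcs_map_eq π hsurj 2]; exact ⟨_, hmem2, rfl⟩
    simpa [hzdef, map_mul, map_inv] using this
  -- product lemma
  have prodlem : ∀ l : List (Fin n), (∀ j ∈ l, inc j.succ p) →
      (l.map fun j => π (wp g' p j)).prod =
        (l.map z).prod * (l.map fun j => π (wp g p j)).prod := by
    intro l hl
    induction l with
    | nil => simp
    | cons j l ih =>
      have hj := hl j (List.mem_cons_self (a := j) (l := l))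
      have hl' : ∀ k ∈ l, inc k.succ p := fun k hk => hl k (List.mem_cons_of_mem j hk)
      have hZl : (l.map z).prod ∈ (⊤ : Subgroup (F n ⧸ M)).lowerCentralSeries 2 := by
        refine Subgroup.list_prod_mem _ ?_
        intro x hx
        obtain ⟨k, hk, rfl⟩ := List.mem_map.mp hx
        exact hzmem k (hl' k hk)
      have hcomm : Commute (π (wp g p j)) ((l.map z).prod) :=
        (central _ hZl _)
      simp only [List.map_cons, List.prod_cons, ih hl']
      have : π (wp g' p j) = z j * π (wp g p j) := by
        simp [hzdef]
      rw [this, mul_assoc, ← mul_assoc (π (wp g p j)), hcomm.eq]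
      group
  -- elements of sList satisfy incidence
  have hmemS : ∀ j ∈ sList inc p, inc j.succ p := by
    intro j hj
    rw [sList, Finset.mem_sort] at hj
    exact (Finset.mem_filter.mp hj).2
  -- π of cword
  set Zfull : F n ⧸ M := ((sList inc p).map z).prod with hZfull
  have hZfullmem : Zfull ∈ (⊤ : Subgroup (F n ⧸ M)).lowerCentralSeries 2 := by
    refine Subgroup.list_prod_mem _ ?_
    intro x hx
    obtain ⟨k, hk, rfl⟩ := List.mem_map.mp hx
    exact hzmem k (hmemS k hk)
  have hcword : ∀ α : ℕ, π (cword inc g' p α) = Zfull * π (cword inc g p α) := by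
    intro α
    have hmem1 : ∀ j ∈ ((sList inc p).take α).reverse, inc j.succ p :=
      fun j hj => hmemS j (List.mem_of_mem_take (List.mem_reverse.mp hj))
    have hmem2 : ∀ j ∈ ((sList inc p).drop α).reverse, inc j.succ p :=
      fun j hj => hmemS j (List.mem_of_mem_drop (List.mem_reverse.mp hj))
    have e1 := prodlem _ hmem1
    have e2 := prodlem _ hmem2
    have hZ2 : ((((sList inc p).drop α).reverse).map z).prod ∈
        (⊤ : Subgroup (F n ⧸ M)).lowerCentralSeries 2 := by
      refine Subgroup.list_prod_mem _ ?_
      intro x hx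
      obtain ⟨k, hk, rfl⟩ := List.mem_map.mp hx
      exact hzmem k (hmem2 k hk)
    have hcommP : Commute ((((sList inc p).take α).reverse.map
        fun j => π (wp g p j)).prod) (((((sList inc p).drop α).reverse).map z).prod) :=
      central _ hZ2 _
    have hperm : List.Perm ((((sList inc p).take α).reverse ++ ((sList inc p).drop α).reverse).map z)
        ((sList inc p).map z) := by
      refine List.Perm.map z ?_
      have p1 : List.Perm (((sList inc p).take α).reverse ++ ((sList inc p).drop α).reverse)
          ((sList inc p).take α ++ ((sList inc p).drop α).reverse) :=
        List.Perm.append_right _ (List.reverse_perm _)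
      have p2 : List.Perm ((sList inc p).take α ++ ((sList inc p).drop α).reverse)
          ((sList inc p).take α ++ (sList inc p).drop α) :=
        List.Perm.append_left _ (List.reverse_perm _)
      have p3 : (sList inc p).take α ++ (sList inc p).drop α = sList inc p :=
        List.take_append_drop α _
      exact (p1.trans p2).trans (by rw [p3])
    have hpair : ((((sList inc p).take α).reverse ++ ((sList inc p).drop α).reverse).map z).Pairwise
        Commute := by
      refine List.pairwise_of_forall_mem_list ?_
      intro a ha b hb
      obtain ⟨k, hk, rfl⟩ := List.mem_map.mp hb
      have hkmem : inc k.succ p := by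
        rcases List.mem_append.mp hk with h | h
        · exact hmem1 k h
        · exact hmem2 k h
      exact (central _ (hzmem k hkmem) a)
    have hZeq : ((((sList inc p).take α).reverse).map z).prod *
        ((((sList inc p).drop α).reverse).map z).prod = Zfull := by
      rw [hZfull, ← List.Perm.prod_eq' hperm hpair, List.map_append, List.prod_append]
    calc π (cword inc g' p α)
        = ((((sList inc p).take α).reverse).map fun j => π (wp g' p j)).prod *
          ((((sList inc p).drop α).reverse).map fun j => π (wp g' p j)).prod := by
          simp [cword, map_mul, map_list_prod, List.map_map, Function.comp_def]
      _ = (((((sList inc p).take α).reverse).map z).prod *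
            ((((sList inc p).take α).reverse).map fun j => π (wp g p j)).prod) *
          (((((sList inc p).drop α).reverse).map z).prod *
            ((((sList inc p).drop α).reverse).map fun j => π (wp g p j)).prod) := by
          rw [e1, e2]
      _ = Zfull * π (cword inc g p α) := by
          rw [← hZeq]
          simp only [cword, map_mul, map_list_prod, List.map_map, Function.comp_def]
          exact comm_rearrange _ _ _ _ hcommP.eq
  -- finish
  have hrel : (cword inc g p ((sList inc p).idxOf i))⁻¹ *
      cword inc g p ((sList inc p).idxOf i + 1) ∈ M := by
    refine le_sup_left (α := Subgroup (F n)) ?_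
    exact Subgroup.subset_normalClosure ⟨i, p, h0, hi, hidx, rfl⟩
  have hπrel : π ((cword inc g p ((sList inc p).idxOf i))⁻¹ *
      cword inc g p ((sList inc p).idxOf i + 1)) = 1 :=
    (QuotientGroup.eq_one_iff _).mpr hrel
  show π _ = 1
  rw [map_mul, map_inv, hcword, hcword, mul_inv_rev, mul_assoc, ← mul_assoc Zfull⁻¹,
    inv_mul_cancel, one_mul, ← map_inv, ← map_mul, hπrel]

lemma MM_eq [Fintype P] (inc : Fin (n + 1) → P → Prop)
    (g g' : Fin n → P → F n)
    (hgg' : ∀ (i : Fin n) (p : P), ¬ inc 0 p → inc i.succ p →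
      g i p * (g' i p)⁻¹ ∈ commutator (F n)) :
    MM inc g = MM inc g' := by
  have hgg'2 : ∀ (i : Fin n) (p : P), ¬ inc 0 p → inc i.succ p →
      g' i p * (g i p)⁻¹ ∈ commutator (F n) := by
    intro i p h0 hi
    have := (commutator (F n)).inv_mem (hgg' i p h0 hi)
    simpa [mul_inv_rev] using this
  apply le_antisymm
  · exact sup_le (Subgroup.normalClosure_le_normal (relSet_subset_MM inc g' g hgg'2))
      le_sup_right
  · exact sup_le (Subgroup.normalClosure_le_normal (relSet_subset_MM inc g g' hgg'))
      le_sup_right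

/-- The canonical isomorphism `G(g)/γ₄G(g) ≃* F/M(g)`. -/
noncomputable def quotEquiv [Fintype P] (inc : Fin (n + 1) → P → Prop)
    (g : Fin n → P → F n) :
    (G inc g ⧸ (⊤ : Subgroup (G inc g)).lowerCentralSeries 3) ≃* (F n ⧸ MM inc g) := by
  have hle : Subgroup.normalClosure (relSet inc g) ≤ MM inc g := le_sup_left
  have hmap : (⊤ : Subgroup (G inc g)).lowerCentralSeries 3 =
      (MM inc g).map (QuotientGroup.mk' (Subgroup.normalClosure (relSet inc g))) := by
    rw [MM, Subgroup.map_sup]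
    have h1 : (Subgroup.normalClosure (relSet inc g)).map
        (QuotientGroup.mk' (Subgroup.normalClosure (relSet inc g))) = ⊥ := by
      rw [Subgroup.map_eq_bot_iff, QuotientGroup.ker_mk']
    have h2 : ((⊤ : Subgroup (F n)).lowerCentralSeries 3).map
        (QuotientGroup.mk' (Subgroup.normalClosure (relSet inc g))) =
        (⊤ : Subgroup (G inc g)).lowerCentralSeries 3 :=
      lcs_map_eq _ (QuotientGroup.mk'_surjective _) 3
    rw [h1, bot_sup_eq, h2]
  haveI : (Subgroup.map (QuotientGroup.mk' (Subgroup.normalClosure (relSet inc g)))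
      (MM inc g)).Normal :=
    Subgroup.Normal.map (inferInstanceAs (MM inc g).Normal) _
      (QuotientGroup.mk'_surjective _)
  have hmap' : (⊤ : Subgroup (F n ⧸ Subgroup.normalClosure (relSet inc g))).lowerCentralSeries 3 =
      (MM inc g).map (QuotientGroup.mk' (Subgroup.normalClosure (relSet inc g))) := hmap
  exact (QuotientGroup.quotientMulEquivOfEq hmap').trans
    (QuotientGroup.quotientQuotientEquivQuotient
      (Subgroup.normalClosure (relSet inc g)) (MM inc g) hle)

lemma quotEquiv_mk [Fintype P] (inc : Fin (n + 1) → P → Prop)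
    (g : Fin n → P → F n) (x : F n) :
    quotEquiv inc g (QuotientGroup.mk (QuotientGroup.mk x)) = QuotientGroup.mk x := by
  simp [quotEquiv, QuotientGroup.quotientMulEquivOfEq,
    QuotientGroup.quotientQuotientEquivQuotient,
    Subgroup.quotientEquivOfEq_mk,
    QuotientGroup.quotientQuotientEquivQuotientAux_mk_mk]
  exact QuotientGroup.quotientQuotientEquivQuotientAux_mk_mk
    (Subgroup.normalClosure (relSet inc g)) (MM inc g) le_sup_left x

theorem iso_mod_gamma4_of_congruent_conjugating_data
    [Fintype P] (inc : Fin (n + 1) → P → Prop)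
    (unique_meet : ∀ i j : Fin (n + 1), i ≠ j → ∃! p : P, inc i p ∧ inc j p)
    (point_on_two : ∀ p : P, ∃ i j : Fin (n + 1), i ≠ j ∧ inc i p ∧ inc j p)
    (nondeg : ∃ p q : P, p ≠ q)
    (g g' : Fin n → P → F n)
    (hgg' : ∀ (i : Fin n) (p : P), ¬ inc 0 p → inc i.succ p →
      g i p * (g' i p)⁻¹ ∈ commutator (F n)) :
    ∃ φ : (G inc g ⧸ (⊤ : Subgroup (G inc g)).lowerCentralSeries 3) ≃*
          (G inc g' ⧸ (⊤ : Subgroup (G inc g')).lowerCentralSeries 3),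
      ∀ i : Fin n,
        φ (QuotientGroup.mk (PresentedGroup.of i)) *
          (QuotientGroup.mk (PresentedGroup.of i) :
            G inc g' ⧸ (⊤ : Subgroup (G inc g')).lowerCentralSeries 3)⁻¹ ∈
          commutator (G inc g' ⧸ (⊤ : Subgroup (G inc g')).lowerCentralSeries 3) := by
  refine ⟨((quotEquiv inc g).trans
    (QuotientGroup.quotientMulEquivOfEq (MM_eq inc g g' hgg'))).trans
      (quotEquiv inc g').symm, ?_⟩
  intro i
  have h1 : ((quotEquiv inc g).trans
      (QuotientGroup.quotientMulEquivOfEq (MM_eq inc g g' hgg'))).trans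
        (quotEquiv inc g').symm (QuotientGroup.mk (PresentedGroup.of i)) =
      QuotientGroup.mk (PresentedGroup.of i) := by
    have e1 : quotEquiv inc g (QuotientGroup.mk (PresentedGroup.of i)) =
        QuotientGroup.mk (FreeGroup.of i) := quotEquiv_mk inc g (FreeGroup.of i)
    have e2 : (quotEquiv inc g').symm
        (QuotientGroup.mk (FreeGroup.of i) : F n ⧸ MM inc g') =
        QuotientGroup.mk (PresentedGroup.of i) := by
      rw [MulEquiv.symm_apply_eq]
      exact (quotEquiv_mk inc g' (FreeGroup.of i)).symm
    simp only [MulEquiv.trans_apply, e1, QuotientGroup.quotientMulEquivOfEq_mk, e2]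
  rw [h1, mul_inv_cancel]
  exact Subgroup.one_mem _

end Rybnikov7
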